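/- Let t_0 < T be positive integers, let 0 < a ≤ 0.01, and let y > 0. Suppose a real sequence satisfies x_{t_0} = 0 and x_{t+1} = (1 + a/(0.99·t))·x_t + y/t for every t with t_0 ≤ t ≤ T − 1. Then x_T ≥ y · T^a · Σ_{t=t_0+1}^{T} t^{−(1+a)}. -/

import Mathlib

noncomputable section

lemma exp_le_aux (u : ℝ) (hu : 0 ≤ u) (hu' : u ≤ 1/100) :
    Real.exp u ≤ 1 + u / 0.99 := by
  have h1 : 1 - u ≤ Real.exp (-u) := by
    have := Real.add_one_le_exp (-u)
    linarith
  have hpos : (0:ℝ) < 1 - u := by linarith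
  have hexp : Real.exp u ≤ (1 - u)⁻¹ := by
    have he : Real.exp u = (Real.exp (-u))⁻¹ := by rw [Real.exp_neg, inv_inv]
    rw [he]
    exact inv_anti₀ hpos h1
  have : (1 - u)⁻¹ ≤ 1 + u / 0.99 := by
    rw [inv_le_iff_one_le_mul₀ hpos]
    have hmul : u * u ≤ u * (1/100) := mul_le_mul_of_nonneg_left hu' hu
    have : (1 + u / 0.99) * (1 - u) = 1 + (u / 99 - (u * u) * (100/99)) := by
      norm_num; ring
    rw [this]
    nlinarith
  linarith

lemma key_ineq (a : ℝ) (ha : 0 < a) (ha' : a ≤ 0.01) (t : ℝ) (ht : 1 ≤ t) :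
    (t + 1) ^ a ≤ (1 + a / (0.99 * t)) * t ^ a := by
  have htpos : (0:ℝ) < t := by linarith
  have hratio : ((t + 1) / t) ^ a ≤ 1 + a / (0.99 * t) := by
    have hq : (0:ℝ) < (t + 1) / t := by positivity
    rw [Real.rpow_def_of_pos hq]
    have hlog : Real.log ((t + 1) / t) ≤ 1 / t := by
      have h := Real.log_le_sub_one_of_pos hq
      have : (t + 1) / t - 1 = 1 / t := by field_simp; ring
      linarith
    have hexp : Real.exp (Real.log ((t + 1) / t) * a) ≤ Real.exp (a / t) := by
      apply Real.exp_le_exp.mpr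
      have hln : 0 ≤ Real.log ((t + 1) / t) := Real.log_nonneg (by
        rw [le_div_iff₀ htpos]; linarith)
      calc Real.log ((t + 1) / t) * a ≤ (1 / t) * a :=
            mul_le_mul_of_nonneg_right hlog ha.le
        _ = a / t := by ring
    have hbound : Real.exp (a / t) ≤ 1 + (a / t) / 0.99 := by
      apply exp_le_aux
      · positivity
      · rw [div_le_div_iff₀ htpos (by norm_num)]
        nlinarith
    have : 1 + (a / t) / 0.99 = 1 + a / (0.99 * t) := by ring
    linarith
  have hdiv : ((t + 1) / t) ^ a = (t + 1) ^ a / t ^ a :=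
    Real.div_rpow (by linarith : (0:ℝ) ≤ t + 1) htpos.le a
  have htpow : (0:ℝ) < t ^ a := Real.rpow_pos_of_pos htpos a
  rw [hdiv, div_le_iff₀ htpow] at hratio
  linarith

theorem statement7 (t0 T : ℕ) (h0 : 0 < t0) (hT : t0 < T) (a y : ℝ)
    (ha : 0 < a) (ha' : a ≤ 0.01) (hy : 0 < y)
    (x : ℕ → ℝ) (hx0 : x t0 = 0)
    (hrec : ∀ t, t0 ≤ t → t < T → x (t + 1) = (1 + a / (0.99 * t)) * x t + y / t) :
    x T ≥ y * (T : ℝ) ^ a * ∑ t ∈ Finset.Icc (t0 + 1) T, (t : ℝ) ^ (-(1 + a)) := by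
  set S : ℕ → ℝ := fun n => ∑ t ∈ Finset.Icc (t0 + 1) n, (t : ℝ) ^ (-(1 + a)) with hS
  suffices h : ∀ t, t0 ≤ t → t ≤ T → x t ≥ y * (t : ℝ) ^ a * S t from
    h T hT.le le_rfl
  intro t ht
  induction t, ht using Nat.le_induction with
  | base =>
    intro _
    have : S t0 = 0 := by
      simp [hS, Finset.Icc_eq_empty_of_lt (Nat.lt_succ_self t0)]
    rw [hx0, this, mul_zero]
  | succ t ht IH =>
    intro hle
    have htT : t < T := hle
    have IH' := IH htT.le
    have ht1 : (1:ℝ) ≤ (t:ℝ) := by exact_mod_cast Nat.one_le_iff_ne_zero.mpr (by omega)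
    have htpos : (0:ℝ) < t := by linarith
    have ht1pos : (0:ℝ) < (t:ℝ) + 1 := by linarith
    have hrec' := hrec t ht htT
    have hSsucc : S (t + 1) = S t + ((t:ℝ) + 1) ^ (-(1 + a)) := by
      have := Finset.sum_Icc_succ_top (f := fun u : ℕ => (u : ℝ) ^ (-(1 + a)))
        (show t0 + 1 ≤ t + 1 by omega)
      rw [hS]
      push_cast at this ⊢
      exact this
    have hSnn : 0 ≤ S t := by
      apply Finset.sum_nonneg
      intro i hi
      have : (0:ℝ) < i := by
        have := Finset.mem_Icc.mp hi
        exact_mod_cast Nat.lt_of_lt_of_le (by omega) this.1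
      positivity
    have hkey : ((t:ℝ) + 1) ^ a ≤ (1 + a / (0.99 * t)) * (t:ℝ) ^ a :=
      key_ineq a ha ha' t ht1
    have hcoef : (0:ℝ) < 1 + a / (0.99 * t) := by positivity
    have hcast : ((t + 1 : ℕ) : ℝ) = (t:ℝ) + 1 := by push_cast; ring
    have hpowmul : ((t:ℝ) + 1) ^ a * ((t:ℝ) + 1) ^ (-(1 + a)) = ((t:ℝ) + 1)⁻¹ := by
      rw [← Real.rpow_add ht1pos]
      rw [show a + -(1 + a) = -1 by ring, Real.rpow_neg_one]
    have step1 : (1 + a / (0.99 * t)) * (y * (t:ℝ) ^ a * S t) + y / t ≤ x (t + 1) := by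
      rw [hrec']
      have := mul_le_mul_of_nonneg_left IH' hcoef.le
      linarith
    have step2 : y * ((t:ℝ) + 1) ^ a * S t + y / ((t:ℝ) + 1) ≤
        (1 + a / (0.99 * t)) * (y * (t:ℝ) ^ a * S t) + y / t := by
      have h1 : y * ((t:ℝ) + 1) ^ a * S t ≤ (1 + a / (0.99 * t)) * (y * (t:ℝ) ^ a * S t) := by
        have : y * ((t:ℝ) + 1) ^ a ≤ y * ((1 + a / (0.99 * t)) * (t:ℝ) ^ a) :=
          mul_le_mul_of_nonneg_left hkey hy.le
        nlinarith
      have h2 : y / ((t:ℝ) + 1) ≤ y / t := by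
        apply div_le_div_of_nonneg_left hy.le htpos
        linarith
      linarith
    rw [hcast, hSsucc]
    have : y * ((t:ℝ) + 1) ^ a * (S t + ((t:ℝ) + 1) ^ (-(1 + a))) =
        y * ((t:ℝ) + 1) ^ a * S t + y * (((t:ℝ) + 1) ^ a * ((t:ℝ) + 1) ^ (-(1 + a))) := by
      ring
    rw [this, hpowmul]
    have : y * ((t:ℝ) + 1)⁻¹ = y / ((t:ℝ) + 1) := by ring
    rw [this]
    linarith
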